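/- Let R be an expanding edge replacement system (satisfying the loop-color assumption) and let Gl_R be its gluing automaton. Then an infinite sequence (x₀,y₀)(x₁,y₁)… over the alphabet Σ² is recognized by Gl_R if and only if the two component sequences x₀x₁… and y₀y₁… both belong to the symbol space Ω_R and are glued, i.e. x₀x₁… ∼ y₀y₁…. -/
import Mathlib


/-!
Formalization of edge replacement systems, their limit-space gluing relation,
and the gluing automaton, following Belk–Forrest and the paper
"Rationality of the gluing of edge replacement systems".
-/

namespace ERSPaper

/-- The five adjacency-type symbols `in`, `out`, `lp`, `db⁺`, `db⁻`. -/
inductive EType : Type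
  | inn : EType
  | out : EType
  | lp : EType
  | dbp : EType
  | dbm : EType
  deriving DecidableEq

/-- An edge replacement system satisfying the loop-color assumption.
`V z` / `E z` are the vertices/edges of the base graph (`z = none`) or of the
replacement graph `Γ c` (`z = some c`).  For loop colors the two boundary
vertices coincide (the single boundary vertex `λ_c`); for non-loop colors they
are distinct.  The field `loop_iff` is the loop-color assumption: an edge is a
loop if and only if its color is a loop color. -/
structure ERS : Type 1 where
  Col : Type
  [colFintype : Fintype Col]
  [colDecEq : DecidableEq Col]
  V : Option Col → Type
  E : Option Col → Type
  [vFintype : ∀ z, Fintype (V z)]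
  [eFintype : ∀ z, Fintype (E z)]
  [vDecEq : ∀ z, DecidableEq (V z)]
  ini : ∀ z, E z → V z
  fin : ∀ z, E z → V z
  col : ∀ z, E z → Col
  loopCol : Col → Prop
  bIni : ∀ c : Col, V (some c)
  bFin : ∀ c : Col, V (some c)
  bd_eq_iff : ∀ c : Col, (bIni c = bFin c ↔ loopCol c)
  loop_iff : ∀ z (e : E z), (ini z e = fin z e ↔ loopCol (col z e))

attribute [instance] ERS.colFintype ERS.colDecEq ERS.vFintype ERS.eFintype ERS.vDecEq

namespace ERS

/-- The alphabet `Σ`: the disjoint union of the edge sets of the base graph and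
of all the replacement graphs. -/
def Alph (R : ERS) : Type := Σ z : Option R.Col, R.E z

/-- Membership in the symbol space `Ω_R`: infinite directed walks on the color
graph starting at `q(0)`, i.e. `x₀` is an edge of the base graph and `x_{l+1}`
is an edge of `Γ_{c(x_l)}`. -/
def IsWalk (R : ERS) (x : ℕ → R.Alph) : Prop :=
  (x 0).1 = none ∧ ∀ l : ℕ, (x (l + 1)).1 = some (R.col (x l).1 (x l).2)

/-- The finite word `x₀ … x_m` belongs to `E_R`. -/
def IsWalkUpTo (R : ERS) (x : ℕ → R.Alph) (m : ℕ) : Prop :=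
  (x 0).1 = none ∧ ∀ l : ℕ, l < m → (x (l + 1)).1 = some (R.col (x l).1 (x l).2)

theorem IsWalk.upTo {R : ERS} {x : ℕ → R.Alph} (hx : R.IsWalk x) (m : ℕ) :
    R.IsWalkUpTo x m :=
  ⟨hx.1, fun l _ => hx.2 l⟩

end ERS

/-- A finite graph whose edges are colored by the colors of `R`. -/
structure GraphData (R : ERS) : Type 1 where
  V : Type
  E : Type
  ι : E → V
  τ : E → V
  col : E → R.Col

/-- An edge is incident on a vertex. -/
def GraphData.IncidentOn {R : ERS} (G : GraphData R) (e : G.E) (v : G.V) : Prop :=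
  G.ι e = v ∨ G.τ e = v

/-- Two edges are incident on a common vertex. -/
def GraphData.Adjacent {R : ERS} (G : GraphData R) (e f : G.E) : Prop :=
  ∃ v : G.V, G.IncidentOn e v ∧ G.IncidentOn f v

namespace ERS

/-- When expanding the edge `e`, a vertex `v` of the replacement graph
`Γ_{c(e)}` is attached: boundary vertices go to the endpoints of `e`,
interior vertices give fresh vertices. -/
def attach (R : ERS) (G : GraphData R) (e : G.E) (v : R.V (some (G.col e))) :
    G.V ⊕ (Σ e : G.E,
      {v : R.V (some (G.col e)) // v ≠ R.bIni (G.col e) ∧ v ≠ R.bFin (G.col e)}) :=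
  if h1 : v = R.bIni (G.col e) then Sum.inl (G.ι e)
  else if h2 : v = R.bFin (G.col e) then Sum.inl (G.τ e)
  else Sum.inr ⟨e, v, h1, h2⟩

/-- The simultaneous expansion of every edge of `G`. -/
def expandG (R : ERS) (G : GraphData R) : GraphData R where
  V := G.V ⊕ (Σ e : G.E,
    {v : R.V (some (G.col e)) // v ≠ R.bIni (G.col e) ∧ v ≠ R.bFin (G.col e)})
  E := Σ e : G.E, R.E (some (G.col e))
  ι := fun p => R.attach G p.1 (R.ini (some (G.col p.1)) p.2)
  τ := fun p => R.attach G p.1 (R.fin (some (G.col p.1)) p.2)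
  col := fun p => R.col (some (G.col p.1)) p.2

/-- The base graph, as graph data. -/
def base (R : ERS) : GraphData R :=
  ⟨R.V none, R.E none, R.ini none, R.fin none, R.col none⟩

/-- The full expansion sequence `E_m`. -/
def fullExp (R : ERS) : ℕ → GraphData R
  | 0 => R.base
  | m + 1 => R.expandG (R.fullExp m)

theorem col_cast (R : ERS) (p : R.Alph) (z : Option R.Col) (h : p.1 = z) :
    R.col z (cast (congrArg R.E h) p.2) = R.col p.1 p.2 := by
  rcases p with ⟨w, e⟩
  cases h
  rfl

/-- The edge of the full expansion `E_m` labeled by the word `x₀ … x_m`,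
together with the fact that its color is the color of its last letter. -/
def wordEdge (R : ERS) (x : ℕ → R.Alph) :
    (m : ℕ) → R.IsWalkUpTo x m →
      {e : (R.fullExp m).E // (R.fullExp m).col e = R.col (x m).1 (x m).2}
  | 0, hx => ⟨cast (congrArg R.E hx.1) (x 0).2, R.col_cast (x 0) none hx.1⟩
  | m + 1, hx =>
    let prev := R.wordEdge x m ⟨hx.1, fun l hl => hx.2 l (Nat.lt_succ_of_lt hl)⟩
    let h : (x (m + 1)).1 = some ((R.fullExp m).col prev.1) :=
      (hx.2 m (Nat.lt_succ_self m)).trans (congrArg some prev.2.symm)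
    ⟨⟨prev.1, cast (congrArg R.E h) (x (m + 1)).2⟩, R.col_cast (x (m + 1)) _ h⟩

/-- The gluing relation: two elements of `Ω_R` are glued when, for every large
enough `n`, their length-`(n+1)` prefixes are incident on a common vertex of
the full expansion `E_n`. -/
def Glued (R : ERS) (x y : ℕ → R.Alph) (hx : R.IsWalk x) (hy : R.IsWalk y) : Prop :=
  ∃ N : ℕ, ∀ n : ℕ, N ≤ n →
    (R.fullExp n).Adjacent (R.wordEdge x n (hx.upTo n)).1 (R.wordEdge y n (hy.upTo n)).1

/-- The expanding condition on a replacement system (formulated after the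
identification of the boundary vertices for loop colors). -/
structure Expanding (R : ERS) : Prop where
  no_isolated : ∀ z (v : R.V z), ∃ e : R.E z, R.ini z e = v ∨ R.fin z e = v
  no_bd_edge : ∀ c : R.Col, ¬ R.loopCol c → ∀ e : R.E (some c),
    ¬ ((R.ini (some c) e = R.bIni c ∧ R.fin (some c) e = R.bFin c) ∨
       (R.ini (some c) e = R.bFin c ∧ R.fin (some c) e = R.bIni c))
  two_edges : ∀ c : R.Col, 2 ≤ Fintype.card (R.E (some c))
  interior : ∀ c : R.Col, ∃ v : R.V (some c), v ≠ R.bIni c ∧ v ≠ R.bFin c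

end ERS

/-- `EndAt ι τ v α` : the edge with initial vertex `ι` and terminal vertex `τ`
is incident on `v`, in the fashion recorded by `α`: incoming (`in`), outgoing
(`out`) or a loop (`lp`). -/
inductive EndAt {V : Type} : V → V → V → EType → Prop
  | inn {i v : V} : i ≠ v → EndAt i v v .inn
  | out {t v : V} : v ≠ t → EndAt v t v .out
  | lp {v : V} : EndAt v v v .lp

/-- Two non-loop edges (given by their endpoints) are parallel. -/
def Parallel {V : Type} (ia ta ib tb : V) : Prop :=
  ia ≠ ta ∧ ((ia = ib ∧ ta = tb) ∨ (ia = tb ∧ ta = ib))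

/-- The Type 1 adjacency-type rule for two distinct adjacent edges, given by
their endpoints: parallel non-loops give the `db` types (same or opposite
orientation), and otherwise the unique common vertex `v` determines the types
via `EndAt`. -/
inductive AdjType {V : Type} : V → V → V → V → EType → EType → Prop
  | dbSame {u v : V} : u ≠ v → AdjType u v u v .dbp .dbp
  | dbOpp {u v : V} : u ≠ v → AdjType u v v u .dbp .dbm
  | single {ia ta ib tb v : V} {α β : EType} :
      ¬ Parallel ia ta ib tb → EndAt ia ta v α → EndAt ib tb v β →
      AdjType ia ta ib tb α β

/-- The states of the gluing automaton `Gl_R`. -/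
inductive GlState (R : ERS) : Type
  | q0 : Option R.Col → GlState R
  | q1 : R.Col → EType → R.Col → EType → GlState R

/-- Membership in `Q₀`. -/
def GlState.inQ0 {R : ERS} : GlState R → Prop
  | .q0 _ => True
  | _ => False

/-- Membership in `Q₁`. -/
def GlState.inQ1 {R : ERS} : GlState R → Prop
  | .q1 _ _ _ _ => True
  | _ => False

/-- The defining conditions for states of `Q₁`: `γ ≠ db⁻` and
(`δ ∈ {db⁺, db⁻}` iff `γ = db⁺`). -/
def GlState.Valid {R : ERS} : GlState R → Prop
  | .q0 _ => True
  | .q1 _ γ _ δ => γ ≠ .dbm ∧ ((δ = .dbp ∨ δ = .dbm) ↔ γ = .dbp)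

/-- The tracked boundary vertex of `Γ_c` for a non-`db` symbol:
`τ_c` for `in`, `ι_c` for `out`, and `λ_c` (the identified boundary vertex)
for `lp`. -/
def trackedV (R : ERS) (c : R.Col) : EType → Set (R.V (some c))
  | .inn => {R.bFin c}
  | .out => {R.bIni c}
  | .lp => {R.bIni c}
  | _ => ∅

/-- The pairs of tracked vertices of a state `q₁(i,γ;j,δ)`. -/
inductive TrackedPair (R : ERS) (i j : R.Col) :
    EType → EType → R.V (some i) → R.V (some j) → Prop
  | nondb {γ δ : EType} {u : R.V (some i)} {w : R.V (some j)} :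
      u ∈ trackedV R i γ → w ∈ trackedV R j δ → TrackedPair R i j γ δ u w
  | dbppIni : TrackedPair R i j .dbp .dbp (R.bIni i) (R.bIni j)
  | dbppFin : TrackedPair R i j .dbp .dbp (R.bFin i) (R.bFin j)
  | dbpmIni : TrackedPair R i j .dbp .dbm (R.bIni i) (R.bFin j)
  | dbpmFin : TrackedPair R i j .dbp .dbm (R.bFin i) (R.bIni j)

/-- The transitions of the gluing automaton `Gl_R`. -/
inductive GlTrans (R : ERS) : GlState R → R.Alph × R.Alph → GlState R → Prop
  | type0 (z : Option R.Col) (e : R.E z) :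
      GlTrans R (.q0 z) (⟨z, e⟩, ⟨z, e⟩) (.q0 (some (R.col z e)))
  | type1 (z : Option R.Col) (a b : R.E z) (hab : a ≠ b) {α β : EType}
      (h : AdjType (R.ini z a) (R.fin z a) (R.ini z b) (R.fin z b) α β) :
      GlTrans R (.q0 z) (⟨z, a⟩, ⟨z, b⟩) (.q1 (R.col z a) α (R.col z b) β)
  | type2 (i j : R.Col) (γ δ : EType) (a : R.E (some i)) (b : R.E (some j))
      {u : R.V (some i)} {w : R.V (some j)}
      (hp : TrackedPair R i j γ δ u w) {α β : EType}
      (ha : EndAt (R.ini (some i) a) (R.fin (some i) a) u α)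
      (hb : EndAt (R.ini (some j) b) (R.fin (some j) b) w β) :
      GlTrans R (.q1 i γ j δ) (⟨some i, a⟩, ⟨some j, b⟩)
        (.q1 (R.col (some i) a) α (R.col (some j) b) β)

/-- Infinite runs of `Gl_R` from the initial state `q₀(0)`. -/
def GlRun (R : ERS) (w : ℕ → R.Alph × R.Alph) (q : ℕ → GlState R) : Prop :=
  q 0 = .q0 none ∧ ∀ l : ℕ, GlTrans R (q l) (w l) (q (l + 1))

/-- `Gl_R` recognizes the infinite sequence `w`. -/
def GlAccepts (R : ERS) (w : ℕ → R.Alph × R.Alph) : Prop :=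
  ∃ q : ℕ → GlState R, GlRun R w q

/-- Finite runs of `Gl_R` processing the letters `w 0, …, w m`. -/
def GlRunFin (R : ERS) (w : ℕ → R.Alph × R.Alph) (m : ℕ) (q : ℕ → GlState R) : Prop :=
  q 0 = .q0 none ∧ ∀ l : ℕ, l ≤ m → GlTrans R (q l) (w l) (q (l + 1))

/-- `Gl_R` recognizes the finite word `w 0, …, w m`. -/
def GlAcceptsFin (R : ERS) (w : ℕ → R.Alph × R.Alph) (m : ℕ) : Prop :=
  ∃ q : ℕ → GlState R, GlRunFin R w m q

/-- The transitions of the full sub-automaton `T_R` induced by `Q₀`. -/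
def TTrans (R : ERS) (s : GlState R) (p : R.Alph × R.Alph) (t : GlState R) : Prop :=
  GlTrans R s p t ∧ s.inQ0 ∧ t.inQ0

/-- Finite runs of `T_R` processing the letters `w 0, …, w m`. -/
def TRunFin (R : ERS) (w : ℕ → R.Alph × R.Alph) (m : ℕ) (q : ℕ → GlState R) : Prop :=
  q 0 = .q0 none ∧ ∀ l : ℕ, l ≤ m → TTrans R (q l) (w l) (q (l + 1))

/-- `T_R` recognizes the finite word `w 0, …, w m`. -/
def TAcceptsFin (R : ERS) (w : ℕ → R.Alph × R.Alph) (m : ℕ) : Prop :=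
  ∃ q : ℕ → GlState R, TRunFin R w m q

end ERSPaper

namespace ERSPaper

open ERS

variable {R : ERS}

/-! ### Auxiliary notions for the proof -/

/-- A symbol is one of `in`, `out`, `lp`. -/
def NonDb (γ : EType) : Prop := γ = .inn ∨ γ = .out ∨ γ = .lp

theorem nondb_not_dbp : ¬ NonDb .dbp := fun h => by rcases h with h | h | h <;> cases h

theorem EndAt.nondb {V : Type} {i t v : V} {α : EType} (h : EndAt i t v α) : NonDb α := by
  cases h with
  | inn _ => exact .inl rfl
  | out _ => exact .inr (.inl rfl)
  | lp => exact .inr (.inr rfl)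

theorem EndAt.incid {V : Type} {i t v : V} {α : EType} (h : EndAt i t v α) : i = v ∨ t = v := by
  cases h with
  | inn _ => exact .inr rfl
  | out _ => exact .inl rfl
  | lp => exact .inl rfl

theorem EndAt.map {V V' : Type} {f : V → V'} (hf : Function.Injective f)
    {i t v : V} {α : EType} (h : EndAt i t v α) : EndAt (f i) (f t) (f v) α := by
  cases h with
  | inn h => exact .inn fun e => h (hf e)
  | out h => exact .out fun e => h (hf e)
  | lp => exact .lp

theorem endAt_inn {V : Type} {i t v : V} : EndAt i t v .inn ↔ t = v ∧ i ≠ v := by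
  constructor
  · intro h; cases h; exact ⟨rfl, ‹_›⟩
  · rintro ⟨rfl, h⟩; exact .inn h

theorem endAt_out {V : Type} {i t v : V} : EndAt i t v .out ↔ i = v ∧ v ≠ t := by
  constructor
  · intro h; cases h; exact ⟨rfl, ‹_›⟩
  · rintro ⟨rfl, h⟩; exact .out h

theorem endAt_lp {V : Type} {i t v : V} : EndAt i t v .lp ↔ i = v ∧ t = v := by
  constructor
  · intro h; cases h; exact ⟨rfl, rfl⟩
  · rintro ⟨rfl, rfl⟩; exact .lp

theorem endAt_exists {V : Type} {i t v : V} (h : i = v ∨ t = v) : ∃ α, EndAt i t v α := by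
  classical
  rcases eq_or_ne i t with rfl | hne
  · rcases h with rfl | rfl
    exacts [⟨.lp, .lp⟩, ⟨.lp, .lp⟩]
  · rcases h with rfl | rfl
    exacts [⟨.out, .out hne⟩, ⟨.inn, .inn hne⟩]

theorem parallel_reflect {V V' : Type} {f : V → V'} (hf : Function.Injective f)
    {ia ta ib tb : V} (h : Parallel (f ia) (f ta) (f ib) (f tb)) : Parallel ia ta ib tb := by
  refine ⟨fun e => h.1 (congrArg f e), ?_⟩
  rcases h.2 with ⟨e1, e2⟩ | ⟨e1, e2⟩
  exacts [.inl ⟨hf e1, hf e2⟩, .inr ⟨hf e1, hf e2⟩]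

/-- The geometric configuration recorded by a pair of symbols. -/
def ConfPair {V : Type} (ia ta ib tb : V) (γ δ : EType) : Prop :=
  (NonDb γ ∧ NonDb δ ∧ ¬ Parallel ia ta ib tb ∧ ∃ v, EndAt ia ta v γ ∧ EndAt ib tb v δ) ∨
  (γ = .dbp ∧ ia ≠ ta ∧
    ((δ = .dbp ∧ ia = ib ∧ ta = tb) ∨ (δ = .dbm ∧ ia = tb ∧ ta = ib)))

theorem confPair_map {V V' : Type} {f : V → V'} (hf : Function.Injective f)
    {ia ta ib tb : V} {γ δ : EType} (h : ConfPair ia ta ib tb γ δ) :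
    ConfPair (f ia) (f ta) (f ib) (f tb) γ δ := by
  rcases h with ⟨n1, n2, np, v, e1, e2⟩ | ⟨hg, hne, hp⟩
  · exact .inl ⟨n1, n2, fun hp => np (parallel_reflect hf hp), f v, e1.map hf, e2.map hf⟩
  · refine .inr ⟨hg, fun e => hne (hf e), ?_⟩
    rcases hp with ⟨hd, e1, e2⟩ | ⟨hd, e1, e2⟩
    exacts [.inl ⟨hd, congrArg f e1, congrArg f e2⟩, .inr ⟨hd, congrArg f e1, congrArg f e2⟩]

theorem confPair_total {V : Type} {ia ta ib tb v : V}
    (i1 : ia = v ∨ ta = v) (i2 : ib = v ∨ tb = v) : ∃ γ δ, ConfPair ia ta ib tb γ δ := by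
  classical
  by_cases hp : Parallel ia ta ib tb
  · obtain ⟨hne, h | h⟩ := hp
    · exact ⟨.dbp, .dbp, .inr ⟨rfl, hne, .inl ⟨rfl, h.1, h.2⟩⟩⟩
    · exact ⟨.dbp, .dbm, .inr ⟨rfl, hne, .inr ⟨rfl, h.1, h.2⟩⟩⟩
  · obtain ⟨α, hA⟩ := endAt_exists i1
    obtain ⟨β, hB⟩ := endAt_exists i2
    exact ⟨α, β, .inl ⟨hA.nondb, hB.nondb, hp, v, hA, hB⟩⟩

theorem confPair_of_adjType {V : Type} {ia ta ib tb : V} {α β : EType}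
    (h : AdjType ia ta ib tb α β) : ConfPair ia ta ib tb α β := by
  cases h with
  | dbSame hne => exact .inr ⟨rfl, hne, .inl ⟨rfl, rfl, rfl⟩⟩
  | dbOpp hne => exact .inr ⟨rfl, hne, .inr ⟨rfl, rfl, rfl⟩⟩
  | single hnp hA hB => exact .inl ⟨hA.nondb, hB.nondb, hnp, _, hA, hB⟩

theorem adjType_of_confPair {V : Type} {ia ta ib tb : V} {γ δ : EType}
    (h : ConfPair ia ta ib tb γ δ) : AdjType ia ta ib tb γ δ := by
  rcases h with ⟨_, _, hnp, v, e1, e2⟩ | ⟨rfl, hne, ⟨rfl, e1, e2⟩ | ⟨rfl, e1, e2⟩⟩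
  · exact .single hnp e1 e2
  · rw [← e1, ← e2]; exact .dbSame hne
  · rw [← e1, ← e2]; exact .dbOpp hne

theorem common_unique {V : Type} {ia ta ib tb v v₀ : V} {γ δ : EType}
    (h1 : EndAt ia ta v₀ γ) (h2 : EndAt ib tb v₀ δ) (hnp : ¬ Parallel ia ta ib tb)
    (i1 : ia = v ∨ ta = v) (i2 : ib = v ∨ tb = v) : v = v₀ := by
  cases h1 with
  | lp => rcases i1 with rfl | rfl <;> rfl
  | inn hA =>
      cases h2 with
      | lp => rcases i2 with rfl | rfl <;> rfl
      | inn hB =>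
          rcases i1 with rfl | rfl
          · rcases i2 with rfl | rfl
            · exact absurd ⟨hA, .inl ⟨rfl, rfl⟩⟩ hnp
            · rfl
          · rfl
      | out hB =>
          rcases i1 with rfl | rfl
          · rcases i2 with rfl | rfl
            · rfl
            · exact absurd ⟨hA, .inr ⟨rfl, rfl⟩⟩ hnp
          · rfl
  | out hA =>
      cases h2 with
      | lp => rcases i2 with rfl | rfl <;> rfl
      | inn hB =>
          rcases i1 with rfl | rfl
          · rfl
          · rcases i2 with rfl | rfl
            · exact absurd ⟨hA, .inr ⟨rfl, rfl⟩⟩ hnp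
            · rfl
      | out hB =>
          rcases i1 with rfl | rfl
          · rfl
          · rcases i2 with rfl | rfl
            · rfl
            · exact absurd ⟨hA, .inl ⟨rfl, rfl⟩⟩ hnp

end ERSPaper

namespace ERSPaper

open ERS

variable {R : ERS}

/-- The loop-colour property for coloured graph data. -/
def GoodG {R : ERS} (G : GraphData R) : Prop :=
  ∀ e : G.E, G.ι e = G.τ e ↔ R.loopCol (G.col e)

theorem good_base (R : ERS) : GoodG R.base := R.loop_iff none

theorem attach_bIni {G : GraphData R} (e : G.E) :
    R.attach G e (R.bIni (G.col e)) = Sum.inl (G.ι e) := dif_pos rfl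

theorem attach_bFin {G : GraphData R} (hG : GoodG G) (e : G.E) :
    R.attach G e (R.bFin (G.col e)) = Sum.inl (G.τ e) := by
  unfold ERS.attach
  split_ifs with h1 h2
  · exact congrArg Sum.inl ((hG e).2 ((R.bd_eq_iff _).1 h1.symm))
  · rfl
  all_goals exact absurd rfl h2

theorem attach_inl_cases {G : GraphData R} {e : G.E} {X : R.V (some (G.col e))} {v : G.V}
    (h : R.attach G e X = Sum.inl v) :
    (X = R.bIni (G.col e) ∧ G.ι e = v) ∨ (X = R.bFin (G.col e) ∧ G.τ e = v) := by
  unfold ERS.attach at h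
  split_ifs at h with h1 h2
  · exact .inl ⟨h1, Sum.inl.inj h⟩
  · exact .inr ⟨h2, Sum.inl.inj h⟩
  all_goals exact Sum.noConfusion h

theorem attach_inr_fst {G : GraphData R} {e : G.E} {X : R.V (some (G.col e))}
    {y : Σ f : G.E, {v : R.V (some (G.col f)) // v ≠ R.bIni (G.col f) ∧ v ≠ R.bFin (G.col f)}}
    (h : R.attach G e X = Sum.inr y) : y.1 = e := by
  unfold ERS.attach at h
  split_ifs at h
  all_goals first
    | exact Sum.noConfusion h
    | (injection h with h'; rw [← h'])

theorem attach_inj {G : GraphData R} (hG : GoodG G) (e : G.E) :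
    Function.Injective (R.attach G e) := by
  have key : ∀ p q : R.V (some (G.col e)),
      (p = R.bIni (G.col e) ∨ p = R.bFin (G.col e)) →
      R.attach G e p = R.attach G e q → p = q := by
    intro p q hp h
    rcases hp with rfl | rfl
    · rw [attach_bIni] at h
      rcases attach_inl_cases h.symm with ⟨rfl, _⟩ | ⟨rfl, hio⟩
      · rfl
      · exact (R.bd_eq_iff _).2 ((hG e).1 hio.symm)
    · rw [attach_bFin hG] at h
      rcases attach_inl_cases h.symm with ⟨rfl, hio⟩ | ⟨rfl, _⟩
      · exact ((R.bd_eq_iff _).2 ((hG e).1 hio)).symm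
      · rfl
  intro p q h
  by_cases hp : p = R.bIni (G.col e) ∨ p = R.bFin (G.col e)
  · exact key p q hp h
  · by_cases hq : q = R.bIni (G.col e) ∨ q = R.bFin (G.col e)
    · exact (key q p hq h.symm).symm
    · push_neg at hp hq
      have h1 : R.attach G e p = Sum.inr ⟨e, ⟨p, hp.1, hp.2⟩⟩ := by
        unfold ERS.attach; rw [dif_neg hp.1, dif_neg hp.2]
      have h2 : R.attach G e q = Sum.inr ⟨e, ⟨q, hq.1, hq.2⟩⟩ := by
        unfold ERS.attach; rw [dif_neg hq.1, dif_neg hq.2]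
      rw [h1, h2] at h
      have h3 := Sum.inr.inj h
      injection h3 with hfst hsnd
      exact congrArg Subtype.val hsnd

theorem good_expand {G : GraphData R} (hG : GoodG G) : GoodG (R.expandG G) := by
  rintro ⟨e, a⟩
  show R.attach G e (R.ini _ a) = R.attach G e (R.fin _ a) ↔ _
  constructor
  · intro h; exact (R.loop_iff _ a).1 (attach_inj hG e h)
  · intro h; exact congrArg _ ((R.loop_iff _ a).2 h)

theorem good_fullExp (R : ERS) : ∀ m, GoodG (R.fullExp m)
  | 0 => good_base R
  | m + 1 => good_expand (good_fullExp R m)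

theorem endAt_expand
    (hbd : ∀ c : R.Col, ¬ R.loopCol c → ∀ e : R.E (some c),
      ¬ ((R.ini (some c) e = R.bIni c ∧ R.fin (some c) e = R.bFin c) ∨
         (R.ini (some c) e = R.bFin c ∧ R.fin (some c) e = R.bIni c)))
    {G : GraphData R} {e : G.E} {a : R.E (some (G.col e))}
    {u : R.V (some (G.col e))} {v : G.V} {α : EType}
    (hu : R.attach G e u = Sum.inl v)
    (h : EndAt (R.ini (some (G.col e)) a) (R.fin (some (G.col e)) a) u α) :
    EndAt ((R.expandG G).ι ⟨e, a⟩) ((R.expandG G).τ ⟨e, a⟩) (Sum.inl v) α := by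
  have both : ∀ X : R.V (some (G.col e)), R.attach G e X = Sum.inl v → X ≠ u →
      ((R.ini (some (G.col e)) a = X ∧ R.fin (some (G.col e)) a = u) ∨
       (R.ini (some (G.col e)) a = u ∧ R.fin (some (G.col e)) a = X)) → False := by
    intro X hX hXu hend
    rcases attach_inl_cases hX with ⟨hX1, _⟩ | ⟨hX1, _⟩ <;>
      rcases attach_inl_cases hu with ⟨hu1, _⟩ | ⟨hu1, _⟩
    · exact hXu (hX1.trans hu1.symm)
    · by_cases hl : R.loopCol (G.col e)
      · exact hXu (hX1.trans (((R.bd_eq_iff _).2 hl).trans hu1.symm))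
      · rcases hend with ⟨e1, e2⟩ | ⟨e1, e2⟩
        · exact hbd _ hl a (.inl ⟨e1.trans hX1, e2.trans hu1⟩)
        · exact hbd _ hl a (.inr ⟨e1.trans hu1, e2.trans hX1⟩)
    · by_cases hl : R.loopCol (G.col e)
      · exact hXu (hX1.trans (((R.bd_eq_iff _).2 hl).symm.trans hu1.symm))
      · rcases hend with ⟨e1, e2⟩ | ⟨e1, e2⟩
        · exact hbd _ hl a (.inr ⟨e1.trans hX1, e2.trans hu1⟩)
        · exact hbd _ hl a (.inl ⟨e1.trans hu1, e2.trans hX1⟩)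
    · exact hXu (hX1.trans hu1.symm)
  rcases h.nondb with rfl | rfl | rfl
  · obtain ⟨h1, h2⟩ := endAt_inn.1 h
    refine endAt_inn.2 ⟨by show R.attach G e _ = _; rw [h1, hu], fun hc => ?_⟩
    exact both _ hc h2 (.inl ⟨rfl, h1⟩)
  · obtain ⟨h1, h2⟩ := endAt_out.1 h
    refine endAt_out.2 ⟨by show R.attach G e _ = _; rw [h1, hu], fun hc => ?_⟩
    exact both _ hc.symm (fun hh => h2 hh.symm) (.inr ⟨h1, rfl⟩)
  · obtain ⟨h1, h2⟩ := endAt_lp.1 h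
    refine endAt_lp.2 ⟨?_, ?_⟩ <;> show R.attach G e _ = _
    · rw [h1, hu]
    · rw [h2, hu]

theorem attach_tracked {G : GraphData R} (hG : GoodG G) {e : G.E}
    {u : R.V (some (G.col e))} {γ : EType} {v : G.V}
    (hu : u ∈ trackedV R (G.col e) γ) (hv : EndAt (G.ι e) (G.τ e) v γ) :
    R.attach G e u = Sum.inl v := by
  rcases hv.nondb with rfl | rfl | rfl
  · obtain ⟨h1, h2⟩ := endAt_inn.1 hv
    have hu' : u = R.bFin (G.col e) := hu
    subst hu'
    rw [attach_bFin hG, h1]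
  · obtain ⟨h1, h2⟩ := endAt_out.1 hv
    have hu' : u = R.bIni (G.col e) := hu
    subst hu'
    rw [attach_bIni, h1]
  · obtain ⟨h1, h2⟩ := endAt_lp.1 hv
    have hu' : u = R.bIni (G.col e) := hu
    subst hu'
    rw [attach_bIni, h1]

theorem tracked_of_attach {G : GraphData R} (hG : GoodG G) {e : G.E}
    {u : R.V (some (G.col e))} {γ : EType} {v : G.V}
    (hv : EndAt (G.ι e) (G.τ e) v γ) (hu : R.attach G e u = Sum.inl v) :
    u ∈ trackedV R (G.col e) γ := by
  rcases hv.nondb with rfl | rfl | rfl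
  · obtain ⟨h1, h2⟩ := endAt_inn.1 hv
    rcases attach_inl_cases hu with ⟨rfl, h⟩ | ⟨rfl, h⟩
    · exact absurd h h2
    · rfl
  · obtain ⟨h1, h2⟩ := endAt_out.1 hv
    rcases attach_inl_cases hu with ⟨rfl, h⟩ | ⟨rfl, h⟩
    · rfl
    · exact absurd h.symm h2
  · obtain ⟨h1, h2⟩ := endAt_lp.1 hv
    rcases attach_inl_cases hu with ⟨rfl, h⟩ | ⟨rfl, h⟩
    · rfl
    · exact ((R.bd_eq_iff _).2 ((hG e).1 (h1.trans h2.symm))).symm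

theorem not_parallel_expand
    (hbd : ∀ c : R.Col, ¬ R.loopCol c → ∀ e : R.E (some c),
      ¬ ((R.ini (some c) e = R.bIni c ∧ R.fin (some c) e = R.bFin c) ∨
         (R.ini (some c) e = R.bFin c ∧ R.fin (some c) e = R.bIni c)))
    {G : GraphData R} (hG : GoodG G) {a b : G.E} (hab : a ≠ b)
    {a' : R.E (some (G.col a))} {b' : R.E (some (G.col b))} :
    ¬ Parallel ((R.expandG G).ι ⟨a, a'⟩) ((R.expandG G).τ ⟨a, a'⟩)
      ((R.expandG G).ι ⟨b, b'⟩) ((R.expandG G).τ ⟨b, b'⟩) := by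
  rintro ⟨hne, hp⟩
  have toInl : ∀ (X : R.V (some (G.col a))) (Y : R.V (some (G.col b))),
      R.attach G a X = R.attach G b Y → ∃ v, R.attach G a X = Sum.inl v := by
    intro X Y h
    rcases hX : R.attach G a X with v | y
    · exact ⟨v, rfl⟩
    · rw [hX] at h
      exact absurd ((attach_inr_fst hX).symm.trans (attach_inr_fst h.symm)) hab
  have bnd : ∀ X : R.V (some (G.col a)), (∃ v, R.attach G a X = Sum.inl v) →
      X = R.bIni (G.col a) ∨ X = R.bFin (G.col a) := by
    rintro X ⟨v, hv⟩
    rcases attach_inl_cases hv with ⟨h, _⟩ | ⟨h, _⟩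
    exacts [.inl h, .inr h]
  have h1 : R.ini _ a' = R.bIni (G.col a) ∨ R.ini _ a' = R.bFin (G.col a) := by
    rcases hp with ⟨e1, e2⟩ | ⟨e1, e2⟩ <;> exact bnd _ (toInl _ _ e1)
  have h2 : R.fin _ a' = R.bIni (G.col a) ∨ R.fin _ a' = R.bFin (G.col a) := by
    rcases hp with ⟨e1, e2⟩ | ⟨e1, e2⟩ <;> exact bnd _ (toInl _ _ e2)
  by_cases hl : R.loopCol (G.col a)
  · have hb : R.bIni (G.col a) = R.bFin (G.col a) := (R.bd_eq_iff _).2 hl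
    have key : R.ini _ a' = R.fin _ a' := by
      rcases h1 with e | e <;> rcases h2 with f | f <;> rw [e, f]
      · exact hb
      · exact hb.symm
    exact hne (congrArg (R.attach G a) key)
  · rcases h1 with e1 | e1 <;> rcases h2 with e2 | e2
    · exact hne (congrArg (R.attach G a) (e1.trans e2.symm))
    · exact hbd _ hl a' (.inl ⟨e1, e2⟩)
    · exact hbd _ hl a' (.inr ⟨e1, e2⟩)
    · exact hne (congrArg (R.attach G a) (e1.trans e2.symm))

theorem trackedPair_attach {G : GraphData R} (hG : GoodG G) {a b : G.E} {γ δ : EType}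
    {u : R.V (some (G.col a))} {w : R.V (some (G.col b))}
    (hp : TrackedPair R (G.col a) (G.col b) γ δ u w)
    (hcp : ConfPair (G.ι a) (G.τ a) (G.ι b) (G.τ b) γ δ) :
    ∃ v, R.attach G a u = Sum.inl v ∧ R.attach G b w = Sum.inl v := by
  cases hp with
  | nondb hu hw =>
      rcases hcp with ⟨n1, n2, np, v, e1, e2⟩ | ⟨rfl, hne, hd⟩
      · exact ⟨v, attach_tracked hG hu e1, attach_tracked hG hw e2⟩
      · exact hu.elim
  | dbppIni =>
      rcases hcp with ⟨n1, _⟩ | ⟨_, hne, ⟨_, e1, e2⟩ | ⟨hd, _, _⟩⟩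
      · exact absurd n1 nondb_not_dbp
      · exact ⟨G.ι a, attach_bIni a, by rw [attach_bIni, ← e1]⟩
      · cases hd
  | dbppFin =>
      rcases hcp with ⟨n1, _⟩ | ⟨_, hne, ⟨_, e1, e2⟩ | ⟨hd, _, _⟩⟩
      · exact absurd n1 nondb_not_dbp
      · exact ⟨G.τ a, attach_bFin hG a, by rw [attach_bFin hG, ← e2]⟩
      · cases hd
  | dbpmIni =>
      rcases hcp with ⟨n1, _⟩ | ⟨_, hne, ⟨hd, _, _⟩ | ⟨_, e1, e2⟩⟩
      · exact absurd n1 nondb_not_dbp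
      · cases hd
      · exact ⟨G.ι a, attach_bIni a, by rw [attach_bFin hG, ← e1]⟩
  | dbpmFin =>
      rcases hcp with ⟨n1, _⟩ | ⟨_, hne, ⟨hd, _, _⟩ | ⟨_, e1, e2⟩⟩
      · exact absurd n1 nondb_not_dbp
      · cases hd
      · exact ⟨G.τ a, attach_bFin hG a, by rw [attach_bIni, ← e2]⟩

theorem incident_inl {G : GraphData R} {a : G.E} {a' : R.E (some (G.col a))} {v : G.V}
    (h : (R.expandG G).IncidentOn ⟨a, a'⟩ (Sum.inl v)) : G.IncidentOn a v := by
  rcases h with h | h <;> rcases attach_inl_cases h with ⟨_, h2⟩ | ⟨_, h2⟩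
  exacts [.inl h2, .inr h2, .inl h2, .inr h2]

theorem adj_descend {G : GraphData R} {a b : G.E}
    {a' : R.E (some (G.col a))} {b' : R.E (some (G.col b))}
    (h : (R.expandG G).Adjacent ⟨a, a'⟩ ⟨b, b'⟩) : G.Adjacent a b := by
  obtain ⟨v, h1, h2⟩ := h
  cases v with
  | inl v => exact ⟨v, incident_inl h1, incident_inl h2⟩
  | inr y =>
      have e1 : y.1 = a := by rcases h1 with h | h <;> exact attach_inr_fst h
      have e2 : y.1 = b := by rcases h2 with h | h <;> exact attach_inr_fst h
      have : a = b := e1.symm.trans e2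
      subst this
      exact ⟨G.ι a, .inl rfl, .inl rfl⟩

end ERSPaper

namespace ERSPaper

open ERS

variable {R : ERS}

/-- The invariant configuration associated with a state of the automaton. -/
def Conf {R : ERS} (G : GraphData R) (a b : G.E) : GlState R → Prop
  | .q0 z => a = b ∧ z = some (G.col a)
  | .q1 i γ j δ => a ≠ b ∧ i = G.col a ∧ j = G.col b ∧
      ConfPair (G.ι a) (G.τ a) (G.ι b) (G.τ b) γ δ

theorem conf_adjacent {G : GraphData R} {a b : G.E} {s : GlState R}
    (hc : Conf G a b s) : G.Adjacent a b := by
  cases s with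
  | q0 z =>
      obtain ⟨rfl, -⟩ := hc
      exact ⟨G.ι a, .inl rfl, .inl rfl⟩
  | q1 i γ j δ =>
      obtain ⟨-, -, -, hcp⟩ := hc
      rcases hcp with ⟨-, -, -, v, e1, e2⟩ | ⟨-, -, ⟨-, e1, e2⟩ | ⟨-, e1, e2⟩⟩
      · exact ⟨v, e1.incid, e2.incid⟩
      · exact ⟨G.ι a, .inl rfl, .inl e1.symm⟩
      · exact ⟨G.ι a, .inl rfl, .inr e1.symm⟩

theorem alph_eq_iff {z : Option R.Col} {a b : R.E z} :
    (⟨z, a⟩ : R.Alph) = ⟨z, b⟩ ↔ a = b := by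
  constructor
  · intro h
    exact eq_of_heq (Sigma.mk.inj_iff.1 h).2
  · rintro rfl; rfl

theorem edge_ne {G : GraphData R} {a b : G.E} (h : a ≠ b)
    {a' : R.E (some (G.col a))} {b' : R.E (some (G.col b))} :
    (⟨a, a'⟩ : (R.expandG G).E) ≠ ⟨b, b'⟩ := fun e => h (congrArg Sigma.fst e)

theorem edge_ne' {G : GraphData R} {a : G.E} {a' b' : R.E (some (G.col a))} (h : a' ≠ b') :
    (⟨a, a'⟩ : (R.expandG G).E) ≠ ⟨a, b'⟩ := by
  intro e
  exact h (eq_of_heq (Sigma.mk.inj_iff.1 e).2)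

theorem glTrans_q0_inv {z : Option R.Col} {p : R.Alph × R.Alph} {t : GlState R}
    (h : GlTrans R (.q0 z) p t) :
    (∃ e : R.E z, p = (⟨z, e⟩, ⟨z, e⟩) ∧ t = .q0 (some (R.col z e))) ∨
    (∃ (a b : R.E z) (α β : EType), a ≠ b ∧
      AdjType (R.ini z a) (R.fin z a) (R.ini z b) (R.fin z b) α β ∧
      p = (⟨z, a⟩, ⟨z, b⟩) ∧ t = .q1 (R.col z a) α (R.col z b) β) := by
  cases h with
  | type0 z e => exact .inl ⟨e, rfl, rfl⟩
  | type1 z a b hab hadj => exact .inr ⟨a, b, _, _, hab, hadj, rfl, rfl⟩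

theorem glTrans_q1_inv {i j : R.Col} {γ δ : EType} {p : R.Alph × R.Alph} {t : GlState R}
    (h : GlTrans R (.q1 i γ j δ) p t) :
    ∃ (a : R.E (some i)) (b : R.E (some j)) (u : R.V (some i)) (ww : R.V (some j))
      (α β : EType),
      TrackedPair R i j γ δ u ww ∧
      EndAt (R.ini (some i) a) (R.fin (some i) a) u α ∧
      EndAt (R.ini (some j) b) (R.fin (some j) b) ww β ∧
      p = (⟨some i, a⟩, ⟨some j, b⟩) ∧ t = .q1 (R.col (some i) a) α (R.col (some j) b) β := by
  cases h with
  | type2 i j γ δ a b hp ha hb => exact ⟨a, b, _, _, _, _, hp, ha, hb, rfl, rfl⟩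

theorem conf_base_fwd {a b : R.E none} {t : GlState R}
    (ht : GlTrans R (.q0 none) (⟨none, a⟩, ⟨none, b⟩) t) : Conf R.base a b t := by
  rcases glTrans_q0_inv ht with ⟨e, hp, rfl⟩ | ⟨a0, b0, α, β, hab, hadj, hp, rfl⟩
  · have h1 : a = e := alph_eq_iff.1 (congrArg Prod.fst hp)
    have h2 : b = e := alph_eq_iff.1 (congrArg Prod.snd hp)
    subst h1; subst h2
    exact ⟨rfl, rfl⟩
  · have h1 : a = a0 := alph_eq_iff.1 (congrArg Prod.fst hp)
    have h2 : b = b0 := alph_eq_iff.1 (congrArg Prod.snd hp)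
    subst h1; subst h2
    exact ⟨hab, rfl, rfl, confPair_of_adjType hadj⟩

theorem conf_base_bwd {a b : R.E none} (hadj : R.base.Adjacent a b) :
    ∃ t, GlTrans R (.q0 none) (⟨none, a⟩, ⟨none, b⟩) t ∧ Conf R.base a b t := by
  rcases eq_or_ne a b with rfl | hne
  · exact ⟨_, .type0 none a, rfl, rfl⟩
  · obtain ⟨v, i1, i2⟩ := hadj
    obtain ⟨γ, δ, hcp⟩ := confPair_total i1 i2
    exact ⟨_, .type1 none a b hne (adjType_of_confPair hcp), hne, rfl, rfl, hcp⟩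

theorem conf_step_fwd
    (hbd : ∀ c : R.Col, ¬ R.loopCol c → ∀ e : R.E (some c),
      ¬ ((R.ini (some c) e = R.bIni c ∧ R.fin (some c) e = R.bFin c) ∨
         (R.ini (some c) e = R.bFin c ∧ R.fin (some c) e = R.bIni c)))
    {G : GraphData R} (hG : GoodG G) {a b : G.E}
    {a' : R.E (some (G.col a))} {b' : R.E (some (G.col b))} {s t : GlState R}
    (hc : Conf G a b s)
    (ht : GlTrans R s (⟨some (G.col a), a'⟩, ⟨some (G.col b), b'⟩) t) :
    Conf (R.expandG G) ⟨a, a'⟩ ⟨b, b'⟩ t := by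
  cases s with
  | q0 z =>
      obtain ⟨h1, h2⟩ := hc
      subst h1; subst h2
      rcases glTrans_q0_inv ht with ⟨e, hp, rfl⟩ | ⟨a0, b0, α, β, hab, hadj, hp, rfl⟩
      · have h1 : a' = e := alph_eq_iff.1 (congrArg Prod.fst hp)
        have h2 : b' = e := alph_eq_iff.1 (congrArg Prod.snd hp)
        subst h1; subst h2
        exact ⟨rfl, rfl⟩
      · have h1 : a' = a0 := alph_eq_iff.1 (congrArg Prod.fst hp)
        have h2 : b' = b0 := alph_eq_iff.1 (congrArg Prod.snd hp)
        subst h1; subst h2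
        exact ⟨edge_ne' hab, rfl, rfl,
          confPair_map (attach_inj hG a) (confPair_of_adjType hadj)⟩
  | q1 i γ j δ =>
      obtain ⟨hab, h1, h2, hcp⟩ := hc
      subst h1; subst h2
      obtain ⟨a0, b0, u, ww, α, β, hp, hA, hB, hpe, rfl⟩ := glTrans_q1_inv ht
      have e1 : a' = a0 := alph_eq_iff.1 (congrArg Prod.fst hpe)
      have e2 : b' = b0 := alph_eq_iff.1 (congrArg Prod.snd hpe)
      subst e1; subst e2
      obtain ⟨v, hva, hvb⟩ := trackedPair_attach hG hp hcp
      exact ⟨edge_ne hab, rfl, rfl,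
        .inl ⟨hA.nondb, hB.nondb, not_parallel_expand hbd hG hab,
          Sum.inl v, endAt_expand hbd hva hA, endAt_expand hbd hvb hB⟩⟩

theorem conf_step_bwd
    (hbd : ∀ c : R.Col, ¬ R.loopCol c → ∀ e : R.E (some c),
      ¬ ((R.ini (some c) e = R.bIni c ∧ R.fin (some c) e = R.bFin c) ∨
         (R.ini (some c) e = R.bFin c ∧ R.fin (some c) e = R.bIni c)))
    {G : GraphData R} (hG : GoodG G) {a b : G.E}
    {a' : R.E (some (G.col a))} {b' : R.E (some (G.col b))} {s : GlState R}
    (hc : Conf G a b s)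
    (hadj : (R.expandG G).Adjacent ⟨a, a'⟩ ⟨b, b'⟩) :
    ∃ t, GlTrans R s (⟨some (G.col a), a'⟩, ⟨some (G.col b), b'⟩) t ∧
      Conf (R.expandG G) ⟨a, a'⟩ ⟨b, b'⟩ t := by
  cases s with
  | q0 z =>
      obtain ⟨h1, h2⟩ := hc
      subst h1; subst h2
      rcases eq_or_ne a' b' with rfl | hne
      · exact ⟨_, .type0 _ a', rfl, rfl⟩
      · obtain ⟨v', i1, i2⟩ := hadj
        have hcomm : ∃ v₀ : R.V (some (G.col a)),
            (R.ini (some (G.col a)) a' = v₀ ∨ R.fin (some (G.col a)) a' = v₀) ∧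
            (R.ini (some (G.col a)) b' = v₀ ∨ R.fin (some (G.col a)) b' = v₀) := by
          rcases i1 with h1 | h1 <;> rcases i2 with h2 | h2
          · exact ⟨_, .inl rfl, .inl (attach_inj hG a (h1.trans h2.symm)).symm⟩
          · exact ⟨_, .inl rfl, .inr (attach_inj hG a (h1.trans h2.symm)).symm⟩
          · exact ⟨_, .inr rfl, .inl (attach_inj hG a (h1.trans h2.symm)).symm⟩
          · exact ⟨_, .inr rfl, .inr (attach_inj hG a (h1.trans h2.symm)).symm⟩
        obtain ⟨v₀, j1, j2⟩ := hcomm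
        obtain ⟨γ, δ, hcp⟩ := confPair_total j1 j2
        exact ⟨_, .type1 _ a' b' hne (adjType_of_confPair hcp), edge_ne' hne, rfl, rfl,
          confPair_map (attach_inj hG a) hcp⟩
  | q1 i γ j δ =>
      obtain ⟨hab, h1, h2, hcp⟩ := hc
      subst h1; subst h2
      obtain ⟨v', i1, i2⟩ := hadj
      cases v' with
      | inr y =>
          have e1 : y.1 = a := by rcases i1 with h | h <;> exact attach_inr_fst h
          have e2 : y.1 = b := by rcases i2 with h | h <;> exact attach_inr_fst h
          exact absurd (e1.symm.trans e2) hab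
      | inl v =>
          obtain ⟨u, hui, hu⟩ : ∃ u, (R.ini (some (G.col a)) a' = u ∨
              R.fin (some (G.col a)) a' = u) ∧ R.attach G a u = Sum.inl v := by
            rcases i1 with h | h
            exacts [⟨_, .inl rfl, h⟩, ⟨_, .inr rfl, h⟩]
          obtain ⟨ww, hwi, hw⟩ : ∃ ww, (R.ini (some (G.col b)) b' = ww ∨
              R.fin (some (G.col b)) b' = ww) ∧ R.attach G b ww = Sum.inl v := by
            rcases i2 with h | h
            exacts [⟨_, .inl rfl, h⟩, ⟨_, .inr rfl, h⟩]
          obtain ⟨α, hA⟩ := endAt_exists hui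
          obtain ⟨β, hB⟩ := endAt_exists hwi
          rcases hcp with ⟨n1, n2, hnp, v₀, e1, e2⟩ | ⟨hg, hne, hd⟩
          · have hva : G.ι a = v ∨ G.τ a = v := by
              rcases attach_inl_cases hu with ⟨_, h⟩ | ⟨_, h⟩
              exacts [.inl h, .inr h]
            have hvb : G.ι b = v ∨ G.τ b = v := by
              rcases attach_inl_cases hw with ⟨_, h⟩ | ⟨_, h⟩
              exacts [.inl h, .inr h]
            have hvv : v = v₀ := common_unique e1 e2 hnp hva hvb
            subst hvv
            exact ⟨_, .type2 _ _ γ δ a' b'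
                (.nondb (tracked_of_attach hG e1 hu) (tracked_of_attach hG e2 hw)) hA hB,
              edge_ne hab, rfl, rfl,
              .inl ⟨hA.nondb, hB.nondb, not_parallel_expand hbd hG hab,
                Sum.inl v, endAt_expand hbd hu hA, endAt_expand hbd hw hB⟩⟩
          · subst hg
            have hua := attach_inl_cases hu
            have hwb := attach_inl_cases hw
            rcases hd with ⟨hdd, f1, f2⟩ | ⟨hdd, f1, f2⟩ <;> subst hdd
            · rcases hua with ⟨hu1, hv1⟩ | ⟨hu1, hv1⟩ <;> rcases hwb with ⟨hw1, hv2⟩ | ⟨hw1, hv2⟩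
              · refine ⟨_, .type2 _ _ _ _ a' b' ?_ hA hB, edge_ne hab, rfl, rfl,
                  .inl ⟨hA.nondb, hB.nondb, not_parallel_expand hbd hG hab,
                    Sum.inl v, endAt_expand hbd hu hA, endAt_expand hbd hw hB⟩⟩
                rw [hu1, hw1]; exact .dbppIni
              · exact absurd (hv1.trans (hv2.symm.trans f2.symm)) hne
              · exact absurd (f1.trans (hv2.trans hv1.symm)) hne
              · refine ⟨_, .type2 _ _ _ _ a' b' ?_ hA hB, edge_ne hab, rfl, rfl,
                  .inl ⟨hA.nondb, hB.nondb, not_parallel_expand hbd hG hab,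
                    Sum.inl v, endAt_expand hbd hu hA, endAt_expand hbd hw hB⟩⟩
                rw [hu1, hw1]; exact .dbppFin
            · rcases hua with ⟨hu1, hv1⟩ | ⟨hu1, hv1⟩ <;> rcases hwb with ⟨hw1, hv2⟩ | ⟨hw1, hv2⟩
              · exact absurd (hv1.trans (hv2.symm.trans f2.symm)) hne
              · refine ⟨_, .type2 _ _ _ _ a' b' ?_ hA hB, edge_ne hab, rfl, rfl,
                  .inl ⟨hA.nondb, hB.nondb, not_parallel_expand hbd hG hab,
                    Sum.inl v, endAt_expand hbd hu hA, endAt_expand hbd hw hB⟩⟩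
                rw [hu1, hw1]; exact .dbpmIni
              · refine ⟨_, .type2 _ _ _ _ a' b' ?_ hA hB, edge_ne hab, rfl, rfl,
                  .inl ⟨hA.nondb, hB.nondb, not_parallel_expand hbd hG hab,
                    Sum.inl v, endAt_expand hbd hu hA, endAt_expand hbd hw hB⟩⟩
                rw [hu1, hw1]; exact .dbpmFin
              · exact absurd (f1.trans (hv2.trans hv1.symm)) hne

def stA {R : ERS} : GlState R → Option R.Col × Option R.Col
  | .q0 z => (z, z)
  | .q1 i _ j _ => (some i, some j)

theorem glTrans_src {s : GlState R} {p : R.Alph × R.Alph} {t : GlState R}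
    (h : GlTrans R s p t) : p.1.1 = (stA s).1 ∧ p.2.1 = (stA s).2 := by
  cases h <;> exact ⟨rfl, rfl⟩

theorem glTrans_tgt {s : GlState R} {p : R.Alph × R.Alph} {t : GlState R}
    (h : GlTrans R s p t) :
    stA t = (some (R.col p.1.1 p.1.2), some (R.col p.2.1 p.2.2)) := by
  cases h <;> rfl

theorem run_walk {w : ℕ → R.Alph × R.Alph} {q : ℕ → GlState R} (h : GlRun R w q) :
    R.IsWalk (fun n => (w n).1) ∧ R.IsWalk (fun n => (w n).2) := by
  have h0 : stA (q 0) = (none, none) := by rw [h.1]; rfl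
  constructor
  · refine ⟨by rw [(glTrans_src (h.2 0)).1, h0], fun l => ?_⟩
    show ((w (l+1)).1).1 = _
    rw [(glTrans_src (h.2 (l+1))).1, glTrans_tgt (h.2 l)]
  · refine ⟨by rw [(glTrans_src (h.2 0)).2, h0], fun l => ?_⟩
    show ((w (l+1)).2).1 = _
    rw [(glTrans_src (h.2 (l+1))).2, glTrans_tgt (h.2 l)]

theorem sigma_cast (p : R.Alph) (z : Option R.Col) (h : p.1 = z) :
    p = ⟨z, cast (congrArg R.E h) p.2⟩ := by
  subst h; rfl

end ERSPaper

namespace ERSPaper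

/-- For an expanding edge replacement system `R`, the gluing
automaton `Gl_R` recognizes an infinite sequence `(x₀,y₀)(x₁,y₁)…` if and only
if both component sequences belong to the symbol space `Ω_R` and are glued. -/
theorem gluing_automaton_recognizes_gluing (R : ERS) (hR : R.Expanding)
    (w : ℕ → R.Alph × R.Alph) :
    GlAccepts R w ↔
      ∃ (hx : R.IsWalk fun n => (w n).1) (hy : R.IsWalk fun n => (w n).2),
        R.Glued (fun n => (w n).1) (fun n => (w n).2) hx hy := by
  constructor
  · rintro ⟨q, hq0, hstep⟩
    obtain ⟨hx, hy⟩ := run_walk ⟨hq0, hstep⟩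
    have key : ∀ m, Conf (R.fullExp m)
        (R.wordEdge (fun n => (w n).1) m (hx.upTo m)).1
        (R.wordEdge (fun n => (w n).2) m (hy.upTo m)).1 (q (m + 1)) := by
      intro m
      induction m with
      | zero =>
          have ht := hstep 0
          rw [hq0, show w 0 = (⟨none, cast (congrArg R.E hx.1) ((w 0).1).2⟩,
              ⟨none, cast (congrArg R.E hy.1) ((w 0).2).2⟩) from
            Prod.ext_iff.2 ⟨sigma_cast _ _ hx.1, sigma_cast _ _ hy.1⟩] at ht
          exact conf_base_fwd ht
      | succ m ih =>
          have ht := hstep (m + 1)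
          have hxa : ((w (m + 1)).1).1 = some ((R.fullExp m).col
              (R.wordEdge (fun n => (w n).1) m (hx.upTo m)).1) :=
            (hx.2 m).trans (congrArg some
              (R.wordEdge (fun n => (w n).1) m (hx.upTo m)).2.symm)
          have hyb : ((w (m + 1)).2).1 = some ((R.fullExp m).col
              (R.wordEdge (fun n => (w n).2) m (hy.upTo m)).1) :=
            (hy.2 m).trans (congrArg some
              (R.wordEdge (fun n => (w n).2) m (hy.upTo m)).2.symm)
          rw [show w (m + 1) = (⟨_, cast (congrArg R.E hxa) ((w (m + 1)).1).2⟩,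
              ⟨_, cast (congrArg R.E hyb) ((w (m + 1)).2).2⟩) from
            Prod.ext_iff.2 ⟨sigma_cast _ _ hxa, sigma_cast _ _ hyb⟩] at ht
          exact conf_step_fwd hR.no_bd_edge (good_fullExp R m) ih ht
    exact ⟨hx, hy, 0, fun n _ => conf_adjacent (key n)⟩
  · rintro ⟨hx, hy, N, hN⟩
    have desc : ∀ m, (R.fullExp (m + 1)).Adjacent
        (R.wordEdge (fun n => (w n).1) (m + 1) (hx.upTo (m + 1))).1
        (R.wordEdge (fun n => (w n).2) (m + 1) (hy.upTo (m + 1))).1 →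
        (R.fullExp m).Adjacent
        (R.wordEdge (fun n => (w n).1) m (hx.upTo m)).1
        (R.wordEdge (fun n => (w n).2) m (hy.upTo m)).1 :=
      fun m h => adj_descend h
    have up : ∀ (j m : ℕ), (R.fullExp (m + j)).Adjacent
        (R.wordEdge (fun n => (w n).1) (m + j) (hx.upTo (m + j))).1
        (R.wordEdge (fun n => (w n).2) (m + j) (hy.upTo (m + j))).1 →
        (R.fullExp m).Adjacent
        (R.wordEdge (fun n => (w n).1) m (hx.upTo m)).1
        (R.wordEdge (fun n => (w n).2) m (hy.upTo m)).1 := by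
      intro j
      induction j with
      | zero => exact fun m h => h
      | succ j ih => exact fun m h => ih m (desc (m + j) h)
    have hall : ∀ m, (R.fullExp m).Adjacent
        (R.wordEdge (fun n => (w n).1) m (hx.upTo m)).1
        (R.wordEdge (fun n => (w n).2) m (hy.upTo m)).1 := by
      intro m
      rcases le_or_gt N m with h | h
      · exact hN m h
      · have hm : m + (N - m) = N := by omega
        exact up (N - m) m (by rw [hm]; exact hN N le_rfl)
    have base0 : ∃ t, GlTrans R (.q0 none) (w 0) t ∧ Conf (R.fullExp 0)
        (R.wordEdge (fun n => (w n).1) 0 (hx.upTo 0)).1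
        (R.wordEdge (fun n => (w n).2) 0 (hy.upTo 0)).1 t := by
      have h := conf_base_bwd (R := R)
        (a := cast (congrArg R.E hx.1) ((w 0).1).2)
        (b := cast (congrArg R.E hy.1) ((w 0).2).2) (hall 0)
      obtain ⟨t, h1, h2⟩ := h
      refine ⟨t, ?_, h2⟩
      rw [show w 0 = (⟨none, cast (congrArg R.E hx.1) ((w 0).1).2⟩,
          ⟨none, cast (congrArg R.E hy.1) ((w 0).2).2⟩) from
        Prod.ext_iff.2 ⟨sigma_cast _ _ hx.1, sigma_cast _ _ hy.1⟩]
      exact h1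
    have stepE : ∀ m (s : GlState R), Conf (R.fullExp m)
        (R.wordEdge (fun n => (w n).1) m (hx.upTo m)).1
        (R.wordEdge (fun n => (w n).2) m (hy.upTo m)).1 s →
        ∃ t, GlTrans R s (w (m + 1)) t ∧ Conf (R.fullExp (m + 1))
          (R.wordEdge (fun n => (w n).1) (m + 1) (hx.upTo (m + 1))).1
          (R.wordEdge (fun n => (w n).2) (m + 1) (hy.upTo (m + 1))).1 t := by
      intro m s hc
      have hxa : ((w (m + 1)).1).1 = some ((R.fullExp m).col
          (R.wordEdge (fun n => (w n).1) m (hx.upTo m)).1) :=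
        (hx.2 m).trans (congrArg some
          (R.wordEdge (fun n => (w n).1) m (hx.upTo m)).2.symm)
      have hyb : ((w (m + 1)).2).1 = some ((R.fullExp m).col
          (R.wordEdge (fun n => (w n).2) m (hy.upTo m)).1) :=
        (hy.2 m).trans (congrArg some
          (R.wordEdge (fun n => (w n).2) m (hy.upTo m)).2.symm)
      have h := conf_step_bwd hR.no_bd_edge (good_fullExp R m)
        (a' := cast (congrArg R.E hxa) ((w (m + 1)).1).2)
        (b' := cast (congrArg R.E hyb) ((w (m + 1)).2).2) hc (hall (m + 1))
      obtain ⟨t, h1, h2⟩ := h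
      refine ⟨t, ?_, h2⟩
      rw [show w (m + 1) = (⟨_, cast (congrArg R.E hxa) ((w (m + 1)).1).2⟩,
          ⟨_, cast (congrArg R.E hyb) ((w (m + 1)).2).2⟩) from
        Prod.ext_iff.2 ⟨sigma_cast _ _ hxa, sigma_cast _ _ hyb⟩]
      exact h1
    obtain ⟨t0, ht0, hc0⟩ := base0
    let Q : ∀ m, {s : GlState R // Conf (R.fullExp m)
        (R.wordEdge (fun n => (w n).1) m (hx.upTo m)).1
        (R.wordEdge (fun n => (w n).2) m (hy.upTo m)).1 s} :=
      fun m => Nat.rec (motive := fun m => {s : GlState R // Conf (R.fullExp m)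
          (R.wordEdge (fun n => (w n).1) m (hx.upTo m)).1
          (R.wordEdge (fun n => (w n).2) m (hy.upTo m)).1 s})
        ⟨t0, hc0⟩
        (fun m prev => ⟨(stepE m prev.1 prev.2).choose,
          (stepE m prev.1 prev.2).choose_spec.2⟩) m
    refine ⟨fun l => Nat.rec (GlState.q0 none) (fun l _ => (Q l).1) l, rfl, fun l => ?_⟩
    cases l with
    | zero => exact ht0
    | succ l => exact (stepE l (Q l).1 (Q l).2).choose_spec.1

end ERSPaper
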